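/- Every finitely generated residually finite group is Hopfian, i.e., every surjective endomorphism of such a group is an isomorphism. -/
import Mathlib

lemma finite_hom_of_fg {G F : Type} [Group G] [Group F] (hfg : Group.FG G)
    [Finite F] : Finite (G →* F) := by
  obtain ⟨S, hS⟩ := hfg.1
  have : Function.Injective (fun (φ : G →* F) => (fun s : S => φ s)) := by
    intro φ ψ h
    apply MonoidHom.eq_of_eqOn_dense hS
    intro x hx
    exact congrFun h ⟨x, hx⟩
  exact Finite.of_injective _ this

/-- Every finitely generated residually finite group is Hopfian: every surjective
endomorphism is an isomorphism (bijective).  Residual finiteness: for every `g ≠ 1`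
there is a finite group `F` and a homomorphism `φ : G →* F` with `φ g ≠ 1`. -/
theorem hopfian_of_fg_residually_finite {G : Type} [Group G]
    (hfg : Group.FG G)
    (hrf : ∀ g : G, g ≠ 1 →
      ∃ (F : Type) (_ : Group F) (_ : Finite F) (φ : G →* F), φ g ≠ 1)
    (f : G →* G) (hf : Function.Surjective f) :
    Function.Bijective f := by
  refine ⟨?_, hf⟩
  rw [← MonoidHom.ker_eq_bot_iff, eq_bot_iff]
  intro g hg
  simp only [Subgroup.mem_bot]
  by_contra hg1
  obtain ⟨F, _, _, φ, hφ⟩ := hrf g hg1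
  haveI := finite_hom_of_fg (F := F) hfg
  -- precomposition with f is injective on Hom(G,F), hence surjective
  have hinj : Function.Injective (fun ψ : G →* F => ψ.comp f) := by
    intro ψ₁ ψ₂ h
    ext x
    obtain ⟨y, rfl⟩ := hf x
    exact DFunLike.congr_fun h y
  have hsurj : Function.Surjective (fun ψ : G →* F => ψ.comp f) :=
    Finite.surjective_of_injective hinj
  obtain ⟨ψ, hψ⟩ := hsurj φ
  have : φ g = 1 := by
    rw [← hψ]
    simp [MonoidHom.comp_apply, MonoidHom.mem_ker.mp hg]
  exact hφ this
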